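/- Let p > 1 and α ∈ ℝ with -1/p < α < 1 - 1/p. There exists a constant C > 0 depending only on p and α such that for every bounded interval (a, b) ⊂ ℝ and every x' ≥ 0 (representing |x'| for x' ∈ ℝ^{d-1}), one has ( (1/(b-a)) ∫_a^b (x' + |s|)^{pα} ds ) · ( (1/(b-a)) ∫_a^b (x' + |s|)^{-pα/(p-1)} ds )^{p-1} ≤ C. -/

import Mathlib

open Real intervalIntegral MeasureTheory Set

private lemma my_measurable_rpow_const (γ : ℝ) : Measurable fun t : ℝ => t ^ γ :=
  measurable_of_measurable_on_compl_singleton 0 <|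
    Continuous.measurable <| continuousOn_iff_continuous_restrict.1 <|
      fun t ht => (Real.continuousAt_rpow_const t γ (Or.inl ht)).continuousWithinAt

private lemma my_ae_ne (c : ℝ) : ∀ᵐ (s : ℝ) ∂(volume : Measure ℝ), s ≠ c := by
  rw [MeasureTheory.ae_iff]
  have h : {x : ℝ | ¬ x ≠ c} = {c} := by ext x; simp
  rw [h]
  exact measure_singleton c

private lemma my_absRpowIntegrable {γ : ℝ} (hγ : -1 < γ) (a b : ℝ) :
    IntervalIntegrable (fun s : ℝ => |s| ^ γ) volume a b := by
  have meas : Measurable fun s : ℝ => |s| ^ γ :=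
    (my_measurable_rpow_const γ).comp measurable_abs
  have h0 : ∀ t : ℝ, 0 ≤ t → IntervalIntegrable (fun s : ℝ => |s| ^ γ) volume 0 t := by
    intro t ht
    refine (intervalIntegrable_rpow' hγ (a := 0) (b := t)).mono_fun
      meas.aestronglyMeasurable ?_
    filter_upwards [ae_restrict_mem measurableSet_uIoc] with s hs
    rw [Set.uIoc_of_le ht] at hs
    have h1 : |s| = s := abs_of_pos hs.1
    simp only [Real.norm_eq_abs, h1, le_refl]
  have hall : ∀ t : ℝ, IntervalIntegrable (fun s : ℝ => |s| ^ γ) volume 0 t := by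
    intro t
    rcases le_or_gt 0 t with h | h
    · exact h0 t h
    · have h2 := (IntervalIntegrable.iff_comp_neg (by simp)).mp (h0 (-t) (by linarith))
      simpa [abs_neg] using h2
  exact (hall a).symm.trans (hall b)

private lemma my_segBound {γ : ℝ} (hγ : -1 < γ) (hγ0 : γ < 0) {a b : ℝ} (ha : 0 ≤ a)
    (hab : a ≤ b) :
    (∫ s in a..b, |s| ^ γ) ≤ (b - a) ^ (γ + 1) / (γ + 1) := by
  have h1 : (∫ s in a..b, |s| ^ γ) = ∫ s in a..b, s ^ γ := by
    apply intervalIntegral.integral_congr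
    intro s hs
    rw [Set.uIcc_of_le hab] at hs
    simp [abs_of_nonneg (ha.trans hs.1)]
  have h2 : (∫ s in a..b, (s - a) ^ γ) = (b - a) ^ (γ + 1) / (γ + 1) := by
    rw [intervalIntegral.integral_comp_sub_right (fun u => u ^ γ) a,
      integral_rpow (Or.inl hγ), sub_self, Real.zero_rpow (by linarith), sub_zero]
  rw [h1, ← h2]
  have hint2 : IntervalIntegrable (fun s : ℝ => (s - a) ^ γ) volume a b := by
    simpa using (intervalIntegrable_rpow' hγ (a := a - a) (b := b - a)).comp_sub_right a
  apply intervalIntegral.integral_mono_ae_restrict hab (intervalIntegrable_rpow' hγ) hint2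
  filter_upwards [ae_restrict_mem measurableSet_Icc,
    (my_ae_ne a).filter_mono (MeasureTheory.ae_mono Measure.restrict_le_self)] with s hs hne
  have hsa : a < s := lt_of_le_of_ne hs.1 (Ne.symm hne)
  exact Real.rpow_le_rpow_of_nonpos (by linarith) (by linarith) hγ0.le

private lemma my_reflect {γ : ℝ} (c d : ℝ) :
    (∫ s in c..d, |s| ^ γ) = ∫ s in -d..-c, |s| ^ γ := by
  have h : (∫ s in c..d, |s| ^ γ) = ∫ s in c..d, |(-s)| ^ γ := by simp
  rw [h, intervalIntegral.integral_comp_neg (fun s => |s| ^ γ)]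

private lemma my_absIntBound {γ : ℝ} (hγ : -1 < γ) (hγ0 : γ < 0) {a b : ℝ} (hab : a < b) :
    (∫ s in a..b, |s| ^ γ) ≤ 2 * ((b - a) ^ (γ + 1) / (γ + 1)) := by
  have hq : 0 < γ + 1 := by linarith
  have hnn : 0 ≤ (b - a) ^ (γ + 1) / (γ + 1) :=
    div_nonneg (Real.rpow_nonneg (by linarith) _) hq.le
  rcases le_or_gt 0 a with ha | ha
  · exact (my_segBound hγ hγ0 ha hab.le).trans (by linarith)
  rcases le_or_gt b 0 with hb | hb
  · rw [my_reflect a b]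
    have h := my_segBound hγ hγ0 (by linarith : (0:ℝ) ≤ -b) (by linarith : -b ≤ -a)
    have he : -a - -b = b - a := by ring
    rw [he] at h
    linarith
  · have h1 : (∫ s in a..(0:ℝ), |s| ^ γ) ≤ (b - a) ^ (γ + 1) / (γ + 1) := by
      rw [my_reflect a 0, neg_zero]
      have h := my_segBound hγ hγ0 (le_refl (0:ℝ)) (by linarith : (0:ℝ) ≤ -a)
      rw [sub_zero] at h
      refine h.trans ?_
      gcongr <;> linarith
    have h2 : (∫ s in (0:ℝ)..b, |s| ^ γ) ≤ (b - a) ^ (γ + 1) / (γ + 1) := by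
      have h := my_segBound hγ hγ0 (le_refl (0:ℝ)) hb.le
      rw [sub_zero] at h
      refine h.trans ?_
      gcongr <;> linarith
    have hadd := intervalIntegral.integral_add_adjacent_intervals
      (my_absRpowIntegrable hγ a 0) (my_absRpowIntegrable hγ 0 b)
    rw [← hadd]
    linarith

private lemma my_fIntegrable {γ : ℝ} (hγ : -1 < γ) {x' : ℝ} (hx' : 0 ≤ x') (a b : ℝ) :
    IntervalIntegrable (fun s : ℝ => (x' + |s|) ^ γ) volume a b := by
  rcases le_or_gt 0 γ with h | h
  · exact ((continuous_const.add continuous_abs).rpow_const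
      (fun s => Or.inr h)).intervalIntegrable a b
  · have meas : Measurable fun s : ℝ => (x' + |s|) ^ γ :=
      (my_measurable_rpow_const γ).comp (measurable_const.add measurable_abs)
    refine (my_absRpowIntegrable hγ a b).mono_fun meas.aestronglyMeasurable ?_
    filter_upwards [(my_ae_ne 0).filter_mono
      (MeasureTheory.ae_mono Measure.restrict_le_self)] with s hs
    have h1 : 0 ≤ (x' + |s|) ^ γ := Real.rpow_nonneg (by positivity) γ
    have h2 : 0 ≤ |s| ^ γ := Real.rpow_nonneg (abs_nonneg s) γ
    simp only [Real.norm_eq_abs]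
    rw [abs_of_nonneg h1, abs_of_nonneg h2]
    exact Real.rpow_le_rpow_of_nonpos (abs_pos.mpr hs) (by linarith) h.le

private lemma my_avgBound {γ : ℝ} (hγ : -1 < γ) {a b x' : ℝ} (hab : a < b) (hx' : 0 ≤ x') :
    (b - a)⁻¹ * ∫ s in a..b, (x' + |s|) ^ γ ≤
      max 1 (2 ^ (1 - γ) / (γ + 1)) * (x' + max |a| |b|) ^ γ := by
  have hL : 0 < b - a := by linarith
  have hmaxpos : 0 < max |a| |b| := by
    have h1 : b ≤ |b| := le_abs_self b
    have h2 : -a ≤ |a| := neg_le_abs a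
    have h3 := le_max_left |a| |b|
    have h4 := le_max_right |a| |b|
    linarith
  have hMpos : 0 < x' + max |a| |b| := by linarith
  have habs : ∀ s ∈ Icc a b, |s| ≤ max |a| |b| := fun s hs => abs_le_max_abs_abs hs.1 hs.2
  have hKge : (1:ℝ) ≤ max 1 (2 ^ (1 - γ) / (γ + 1)) := le_max_left _ _
  have hMγnn : 0 ≤ (x' + max |a| |b|) ^ γ := Real.rpow_nonneg hMpos.le γ
  rcases le_or_gt 0 γ with hγ0 | hγ0
  · have hint : (∫ s in a..b, (x' + |s|) ^ γ) ≤ (b - a) * (x' + max |a| |b|) ^ γ := by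
      have h := intervalIntegral.integral_mono_on hab.le (my_fIntegrable hγ hx' a b)
        (intervalIntegrable_const) (g := fun _ => (x' + max |a| |b|) ^ γ)
        (fun s hs => Real.rpow_le_rpow (by positivity)
          (by have := habs s hs; linarith) hγ0)
      simpa [intervalIntegral.integral_const, smul_eq_mul] using h
    have h2 : (b - a)⁻¹ * (∫ s in a..b, (x' + |s|) ^ γ) ≤
        (b - a)⁻¹ * ((b - a) * (x' + max |a| |b|) ^ γ) :=
      mul_le_mul_of_nonneg_left hint (inv_nonneg.mpr hL.le)
    rw [inv_mul_cancel_left₀ hL.ne'] at h2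
    exact h2.trans (le_mul_of_one_le_left hMγnn hKge)
  · have hq : 0 < γ + 1 := by linarith
    set D := max 0 (max a (-b)) with hD
    have hDa : a ≤ D := le_max_of_le_right (le_max_left _ _)
    have hDb : -b ≤ D := le_max_of_le_right (le_max_right _ _)
    have hD0 : 0 ≤ D := le_max_left _ _
    have hMD : x' + max |a| |b| ≤ (x' + D) + (b - a) := by
      have h1 : |a| ≤ D + (b - a) := abs_le.mpr ⟨by linarith, by linarith⟩
      have h2 : |b| ≤ D + (b - a) := abs_le.mpr ⟨by linarith, by linarith⟩
      have h3 := max_le h1 h2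
      linarith
    have hDle : ∀ s ∈ Icc a b, D ≤ |s| := by
      intro s hs
      have h1 : s ≤ |s| := le_abs_self s
      have h2 : -s ≤ |s| := neg_le_abs s
      have h3 := abs_nonneg s
      exact max_le h3 (max_le (by linarith [hs.1]) (by linarith [hs.2]))
    have h2γpos : (0:ℝ) < 2 ^ (-γ) := Real.rpow_pos_of_pos two_pos _
    have hKbig : (2:ℝ) ^ (-γ) ≤ max 1 (2 ^ (1 - γ) / (γ + 1)) := by
      refine le_trans ?_ (le_max_right _ _)
      rw [show (1 - γ) = 1 + -γ by ring, Real.rpow_add two_pos, Real.rpow_one,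
        le_div_iff₀ hq]
      nlinarith
    rcases le_or_gt (b - a) (x' + D) with hcase | hcase
    · have hmpos : 0 < x' + D := lt_of_lt_of_le hL hcase
      have hint : (∫ s in a..b, (x' + |s|) ^ γ) ≤ (b - a) * (x' + D) ^ γ := by
        have h := intervalIntegral.integral_mono_on hab.le (my_fIntegrable hγ hx' a b)
          (intervalIntegrable_const) (g := fun _ => (x' + D) ^ γ)
          (fun s hs => Real.rpow_le_rpow_of_nonpos hmpos
            (by have := hDle s hs; linarith) hγ0.le)
        simpa [intervalIntegral.integral_const, smul_eq_mul] using h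
      have step1 : (b - a)⁻¹ * (∫ s in a..b, (x' + |s|) ^ γ) ≤ (x' + D) ^ γ := by
        have h2 := mul_le_mul_of_nonneg_left hint (inv_nonneg.mpr hL.le)
        rwa [inv_mul_cancel_left₀ hL.ne'] at h2
      have hstep2 : (2 * (x' + D)) ^ γ ≤ (x' + max |a| |b|) ^ γ :=
        Real.rpow_le_rpow_of_nonpos hMpos (by linarith) hγ0.le
      rw [Real.mul_rpow (by norm_num) hmpos.le] at hstep2
      have h2γ : (0:ℝ) < 2 ^ γ := Real.rpow_pos_of_pos two_pos γ
      have step2 : (x' + D) ^ γ ≤ 2 ^ (-γ) * (x' + max |a| |b|) ^ γ := by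
        rw [Real.rpow_neg (by norm_num : (0:ℝ) ≤ 2)]
        calc (x' + D) ^ γ = (2 ^ γ * (x' + D) ^ γ) / 2 ^ γ := by field_simp
            _ ≤ (x' + max |a| |b|) ^ γ / 2 ^ γ := by gcongr
            _ = (2 ^ γ)⁻¹ * (x' + max |a| |b|) ^ γ := by ring
      refine (step1.trans step2).trans ?_
      exact mul_le_mul_of_nonneg_right hKbig hMγnn
    · have hnear : (∫ s in a..b, (x' + |s|) ^ γ) ≤ ∫ s in a..b, |s| ^ γ := by
        apply intervalIntegral.integral_mono_ae_restrict hab.le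
          (my_fIntegrable hγ hx' a b) (my_absRpowIntegrable hγ a b)
        filter_upwards [(my_ae_ne 0).filter_mono
          (MeasureTheory.ae_mono Measure.restrict_le_self)] with s hs
        exact Real.rpow_le_rpow_of_nonpos (abs_pos.mpr hs) (by linarith) hγ0.le
      have habsb := my_absIntBound hγ hγ0 hab
      have hLγ : (b - a) ^ (γ + 1) = (b - a) ^ γ * (b - a) :=
        Real.rpow_add_one hL.ne' γ
      have hLγpos : (0:ℝ) < (b - a) ^ γ := Real.rpow_pos_of_pos hL γ
      have step1 : (b - a)⁻¹ * (∫ s in a..b, (x' + |s|) ^ γ) ≤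
          2 * (b - a) ^ γ / (γ + 1) := by
        have h := (hnear.trans habsb)
        rw [hLγ] at h
        have h2 := mul_le_mul_of_nonneg_left h (inv_nonneg.mpr hL.le)
        refine h2.trans (le_of_eq ?_)
        field_simp
      have h2L : (2 * (b - a)) ^ γ ≤ (x' + max |a| |b|) ^ γ :=
        Real.rpow_le_rpow_of_nonpos hMpos (by linarith) hγ0.le
      rw [Real.mul_rpow (by norm_num) hL.le] at h2L
      have h2γ : (0:ℝ) < 2 ^ γ := Real.rpow_pos_of_pos two_pos γ
      have step2 : (b - a) ^ γ ≤ 2 ^ (-γ) * (x' + max |a| |b|) ^ γ := by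
        rw [Real.rpow_neg (by norm_num : (0:ℝ) ≤ 2)]
        calc (b - a) ^ γ = (2 ^ γ * (b - a) ^ γ) / 2 ^ γ := by field_simp
          _ ≤ (x' + max |a| |b|) ^ γ / 2 ^ γ := by gcongr
          _ = (2 ^ γ)⁻¹ * (x' + max |a| |b|) ^ γ := by ring
      refine step1.trans ?_
      have hfinal : 2 * (b - a) ^ γ / (γ + 1) ≤
          (2 ^ (1 - γ) / (γ + 1)) * (x' + max |a| |b|) ^ γ := by
        have h1 : (2:ℝ) ^ (1 - γ) = 2 * 2 ^ (-γ) := by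
          rw [show (1 - γ) = 1 + -γ by ring, Real.rpow_add two_pos, Real.rpow_one]
        rw [h1]
        have h2 : 2 * (b - a) ^ γ ≤ 2 * 2 ^ (-γ) * (x' + max |a| |b|) ^ γ := by
          nlinarith [step2]
        calc 2 * (b - a) ^ γ / (γ + 1)
            ≤ (2 * 2 ^ (-γ) * (x' + max |a| |b|) ^ γ) / (γ + 1) :=
              (div_le_div_iff_of_pos_right hq).mpr h2
          _ = (2 * 2 ^ (-γ) / (γ + 1)) * (x' + max |a| |b|) ^ γ := by ring
      refine hfinal.trans ?_
      exact mul_le_mul_of_nonneg_right (le_max_right _ _) hMγnn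

theorem stmt_14 (p α : ℝ) (hp : 1 < p) (hα1 : -1 / p < α) (hα2 : α < 1 - 1 / p) :
    ∃ C : ℝ, 0 < C ∧ ∀ a b : ℝ, a < b → ∀ x' : ℝ, 0 ≤ x' →
      ((b - a)⁻¹ * ∫ s in a..b, (x' + |s|) ^ (p * α)) *
        ((b - a)⁻¹ * ∫ s in a..b, (x' + |s|) ^ (-(p * α) / (p - 1))) ^ (p - 1) ≤ C := by
  have hp0 : 0 < p := by linarith
  have hp1 : 0 < p - 1 := by linarith
  set β := p * α with hβdef
  set β' := -(p * α) / (p - 1) with hβ'def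
  have hβ : -1 < β := by
    have h := mul_lt_mul_of_pos_left hα1 hp0
    have h1 : p * (-1 / p) = -1 := by field_simp
    rw [h1] at h
    exact h
  have hβub : β < p - 1 := by
    have h := mul_lt_mul_of_pos_left hα2 hp0
    have h1 : p * (1 - 1 / p) = p - 1 := by field_simp
    rw [h1] at h
    exact h
  have hβ' : -1 < β' := by
    rw [hβ'def, lt_div_iff₀ hp1]
    linarith
  set K1 := max 1 (2 ^ (1 - β) / (β + 1)) with hK1
  set K2 := max 1 (2 ^ (1 - β') / (β' + 1)) with hK2
  have hK1pos : 0 < K1 := lt_of_lt_of_le one_pos (le_max_left _ _)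
  have hK2pos : 0 < K2 := lt_of_lt_of_le one_pos (le_max_left _ _)
  refine ⟨K1 * K2 ^ (p - 1), mul_pos hK1pos (Real.rpow_pos_of_pos hK2pos _), ?_⟩
  intro a b hab x' hx'
  have hL : 0 < b - a := by linarith
  have hMpos : 0 < x' + max |a| |b| := by
    have h1 : b ≤ |b| := le_abs_self b
    have h2 : -a ≤ |a| := neg_le_abs a
    have h3 := le_max_left |a| |b|
    have h4 := le_max_right |a| |b|
    linarith
  set M := x' + max |a| |b| with hM
  have hA1 := my_avgBound hβ hab hx'
  have hA2 := my_avgBound hβ' hab hx'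
  have hA2nn : 0 ≤ (b - a)⁻¹ * ∫ s in a..b, (x' + |s|) ^ β' :=
    mul_nonneg (inv_nonneg.mpr hL.le)
      (intervalIntegral.integral_nonneg hab.le
        (fun u _ => Real.rpow_nonneg (by positivity) _))
  have hA2' : ((b - a)⁻¹ * ∫ s in a..b, (x' + |s|) ^ β') ^ (p - 1) ≤
      K2 ^ (p - 1) * M ^ (β' * (p - 1)) := by
    have h := Real.rpow_le_rpow hA2nn hA2 hp1.le
    rwa [Real.mul_rpow hK2pos.le (Real.rpow_nonneg hMpos.le _),
      ← Real.rpow_mul hMpos.le] at h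
  have hβ'p : β' * (p - 1) = -β := div_mul_cancel₀ _ hp1.ne'
  rw [hβ'p] at hA2'
  calc ((b - a)⁻¹ * ∫ s in a..b, (x' + |s|) ^ β) *
        ((b - a)⁻¹ * ∫ s in a..b, (x' + |s|) ^ β') ^ (p - 1)
      ≤ (K1 * M ^ β) * (K2 ^ (p - 1) * M ^ (-β)) :=
        mul_le_mul hA1 hA2' (Real.rpow_nonneg hA2nn _)
          (mul_nonneg hK1pos.le (Real.rpow_nonneg hMpos.le β))
    _ = (K1 * K2 ^ (p - 1)) * (M ^ β * M ^ (-β)) := by ring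
    _ = K1 * K2 ^ (p - 1) := by
        rw [← Real.rpow_add hMpos, add_neg_cancel, Real.rpow_zero, mul_one]
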